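/- Fix an integer k ≥ 1 and define L : ℝ² → ℝ in polar coordinates by L(r cos θ, r sin θ) = r² cos(kθ), i.e., identifying ℝ² with ℂ, L(z) = Re(z^k)·|z|^{2−k} for z ≠ 0 and L(0) = 0. Then the open set {z ∈ ℝ² : L(z) < 0} has exactly k connected components. -/

import Mathlib

open Real Complex


lemma cos_lt_cos_iff_aux {β x : ℝ} (hβ0 : 0 < β) (hβ : β ≤ π / 2) :
    Real.cos β < Real.cos x ↔ ∃ n : ℤ, |x - 2 * π * n| < β := by
  have hπ : (0:ℝ) < π := Real.pi_pos
  constructor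
  · intro h
    refine ⟨round (x / (2 * π)), ?_⟩
    set n : ℤ := round (x / (2 * π)) with hn
    have hle : |x - 2 * π * n| ≤ π := by
      have h1 : |x / (2 * π) - n| ≤ 1 / 2 := abs_sub_round _
      have h2 : |x - 2 * π * n| = 2 * π * |x / (2 * π) - n| := by
        rw [show x - 2 * π * n = (2 * π) * (x / (2 * π) - n) by field_simp, abs_mul,
          abs_of_pos (show (0:ℝ) < 2 * π by linarith)]
      rw [h2]; nlinarith
    by_contra hc
    push_neg at hc
    have hcos : Real.cos |x - 2 * π * n| ≤ Real.cos β := by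
      rcases eq_or_lt_of_le hc with h' | h'
      · rw [← h']
      · exact le_of_lt (Real.cos_lt_cos_of_nonneg_of_le_pi hβ0.le hle h')
    rw [Real.cos_abs] at hcos
    have : Real.cos (x - 2 * π * n) = Real.cos x := by
      rw [show x - 2 * π * n = x - n * (2 * π) by ring, Real.cos_sub_int_mul_two_pi]
    linarith
  · rintro ⟨n, hn⟩
    have h1 : Real.cos β < Real.cos |x - 2 * π * n| :=
      Real.cos_lt_cos_of_nonneg_of_le_pi (abs_nonneg _) (by linarith) hn
    rw [Real.cos_abs, show x - 2 * π * n = x - n * (2 * π) by ring,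
      Real.cos_sub_int_mul_two_pi] at h1
    exact h1

lemma cos_neg_iff_aux {x : ℝ} :
    Real.cos x < 0 ↔ ∃ n : ℤ, |x - (2 * n + 1) * π| < π / 2 := by
  have hπ : (0:ℝ) < π := Real.pi_pos
  have h := cos_lt_cos_iff_aux (x := x - π) (β := π / 2) (by linarith) le_rfl
  rw [Real.cos_pi_div_two, Real.cos_sub_pi] at h
  constructor
  · intro hx
    obtain ⟨n, hn⟩ := h.mp (by linarith)
    exact ⟨n, by rw [show x - (2 * n + 1) * π = x - π - 2 * π * n by ring]; exact hn⟩
  · rintro ⟨n, hn⟩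
    have := h.mpr ⟨n, by rw [show x - π - 2 * π * n = x - (2 * n + 1) * π by ring]; exact hn⟩
    linarith

lemma pow_re_eq (k : ℕ) (z : ℂ) :
    (z ^ k).re = ‖z‖ ^ k * Real.cos (k * Complex.arg z) := by
  conv_lhs => rw [← Complex.norm_mul_exp_arg_mul_I z]
  rw [mul_pow, ← Complex.exp_nat_mul]
  rw [show (k : ℂ) * (Complex.arg z * Complex.I) = (↑(k * Complex.arg z) : ℂ) * Complex.I by
    push_cast; ring]
  rw [show ((‖z‖ : ℂ)) ^ k = ((‖z‖ ^ k : ℝ) : ℂ) by push_cast; ring]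
  rw [Complex.re_ofReal_mul, Complex.exp_ofReal_mul_I_re]

lemma rot_re_eq (c : ℝ) (z : ℂ) :
    (Complex.exp (-c * Complex.I) * z).re = ‖z‖ * Real.cos (Complex.arg z - c) := by
  conv_lhs => rw [← Complex.norm_mul_exp_arg_mul_I z]
  rw [show Complex.exp (-c * Complex.I) * ((‖z‖ : ℂ) * Complex.exp (Complex.arg z * Complex.I))
      = (‖z‖ : ℂ) * Complex.exp (↑(Complex.arg z - c) * Complex.I) by
    rw [mul_comm, mul_assoc, ← Complex.exp_add]; push_cast; ring_nf]
  rw [Complex.re_ofReal_mul, Complex.exp_ofReal_mul_I_re]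

set_option maxHeartbeats 1000000 in
/-- Beem's example. For `k ≥ 1` let `L : ℂ → ℝ` be given in polar
coordinates by `L(r cos θ, r sin θ) = r² cos (kθ)`, i.e. `L z = Re(z^k) · |z|^{2-k}`
for `z ≠ 0` and `L 0 = 0`. Then the open set `{z : L z < 0}` of timelike vectors has
exactly `k` connected components. -/
theorem beem_example_timelike_components (k : ℕ) (hk : 1 ≤ k)
    (L : ℂ → ℝ)
    (hL0 : L 0 = 0)
    (hL : ∀ z : ℂ, z ≠ 0 → L z = (z ^ k).re * ‖z‖ ^ ((2 : ℝ) - k)) :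
    Nat.card (ConnectedComponents {z : ℂ // L z < 0}) = k := by
  have hπ : (0:ℝ) < π := Real.pi_pos
  have hK1 : (1:ℝ) ≤ (k:ℝ) := by exact_mod_cast hk
  have hK : (0:ℝ) < (k:ℝ) := by linarith
  set K : ℝ := (k:ℝ) with hKdef
  have hβ0 : 0 < π / (2*K) := by positivity
  have hβle : π / (2*K) ≤ π / 2 := by
    rw [div_le_div_iff₀ (by positivity) (by norm_num)]; nlinarith
  -- uniqueness of the integer n with |t - (2n+1)π/K| < π/(2K)
  have huniq : ∀ (t : ℝ) (n n' : ℤ), |t - (2*(n:ℝ)+1)*π/K| < π/(2*K) →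
      |t - (2*(n':ℝ)+1)*π/K| < π/(2*K) → n = n' := by
    intro t n n' h1 h2
    by_contra hne
    have h3 : |(2*(n:ℝ)+1)*π/K - (2*(n':ℝ)+1)*π/K| < π/K := by
      calc |(2*(n:ℝ)+1)*π/K - (2*(n':ℝ)+1)*π/K|
          ≤ |(2*(n:ℝ)+1)*π/K - t| + |t - (2*(n':ℝ)+1)*π/K| := abs_sub_le _ _ _
        _ = |t - (2*(n:ℝ)+1)*π/K| + |t - (2*(n':ℝ)+1)*π/K| := by rw [abs_sub_comm]
        _ < π/(2*K) + π/(2*K) := by linarith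
        _ = π/K := by field_simp; ring
    have h4 : |(2*(n:ℝ)+1)*π/K - (2*(n':ℝ)+1)*π/K| = |(n:ℝ) - (n':ℝ)| * (2*π/K) := by
      rw [show (2*(n:ℝ)+1)*π/K - (2*(n':ℝ)+1)*π/K = ((n:ℝ) - (n':ℝ)) * (2*π/K) by
        field_simp; ring, abs_mul, abs_of_pos (by positivity : (0:ℝ) < 2*π/K)]
    have h5 : (1:ℝ) ≤ |(n:ℝ) - (n':ℝ)| := by
      have h6 : (1:ℤ) ≤ |n - n'| := Int.one_le_abs (sub_ne_zero.mpr hne)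
      have h7 : ((|n - n'| : ℤ) : ℝ) = |(n:ℝ) - (n':ℝ)| := by push_cast; ring
      rw [← h7]; exact_mod_cast h6
    rw [h4] at h3
    have h8 := mul_le_mul_of_nonneg_right h5 (by positivity : (0:ℝ) ≤ 2*π/K)
    have h9 : (0:ℝ) < π/K := by positivity
    have key : 2 * (π / K) = 2 * π / K := by ring
    linarith
  -- the origin is in no interval
  have hfar : ∀ n : ℤ, ¬ (|(0:ℝ) - (2*(n:ℝ)+1)*π/K| < π/(2*K)) := by
    intro n h
    rw [zero_sub, abs_neg] at h
    have h1 : (1:ℝ) ≤ |2*(n:ℝ)+1| := by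
      have h6 : (1:ℤ) ≤ |2*n+1| := Int.one_le_abs (by omega)
      have h7 : ((|2*n+1| : ℤ) : ℝ) = |2*(n:ℝ)+1| := by push_cast; ring
      rw [← h7]; exact_mod_cast h6
    have h2 : |(2*(n:ℝ)+1)*π/K| = |2*(n:ℝ)+1| * (π/K) := by
      rw [show (2*(n:ℝ)+1)*π/K = (2*(n:ℝ)+1) * (π/K) by ring, abs_mul,
        abs_of_pos (by positivity : (0:ℝ) < π/K)]
    rw [h2] at h
    have h8 := mul_le_mul_of_nonneg_right h1 (le_of_lt (by positivity : (0:ℝ) < π/K))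
    have h9 : (0:ℝ) < π/K := by positivity
    have key : π/(2*K) = (π/K)/2 := by ring
    linarith
  -- the sectors
  set A : Fin k → Set ℂ := fun j =>
    {z | Real.cos (π/(2*K)) * ‖z‖
        < (Complex.exp (-(((2*((j:ℕ):ℝ)+1)*π/K : ℝ) : ℂ) * Complex.I) * z).re} with hAdef
  -- membership characterization
  have hAmem : ∀ (j : Fin k) (z : ℂ), z ∈ A j ↔
      ∃ n : ℤ, n % (k:ℤ) = ((j:ℕ):ℤ) ∧ |Complex.arg z - (2*(n:ℝ)+1)*π/K| < π/(2*K) := by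
    intro j z
    have hjk : ((j:ℕ):ℤ) < (k:ℤ) := by exact_mod_cast j.isLt
    have hj0 : (0:ℤ) ≤ ((j:ℕ):ℤ) := by positivity
    rw [hAdef]
    simp only [Set.mem_setOf_eq, rot_re_eq]
    rcases eq_or_ne z 0 with rfl | hz
    · simp only [map_zero, norm_zero, mul_zero, zero_mul, Complex.arg_zero]
      constructor
      · intro h; exact absurd h (lt_irrefl 0)
      · rintro ⟨n, -, hn⟩; exact absurd hn (hfar n)
    · rw [mul_comm (Real.cos _) (‖z‖),
        mul_lt_mul_iff_right₀ (norm_pos_iff.mpr hz), cos_lt_cos_iff_aux hβ0 hβle]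
      constructor
      · rintro ⟨m, hm⟩
        refine ⟨(j:ℕ) + m*(k:ℤ), by
          rw [Int.add_mul_emod_self_right, Int.emod_eq_of_lt hj0 hjk], ?_⟩
        have heq : Complex.arg z - (2*((((j:ℕ):ℤ) + m*(k:ℤ) : ℤ):ℝ)+1)*π/K
            = Complex.arg z - (2*((j:ℕ):ℝ)+1)*π/K - 2*π*m := by
          push_cast
          field_simp
          ring
        rw [heq]; exact hm
      · rintro ⟨n, hnmod, hn⟩
        refine ⟨n / (k:ℤ), ?_⟩
        have hnk : n = ((j:ℕ):ℤ) + (n/(k:ℤ))*(k:ℤ) := by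
          have h10 := Int.emod_add_mul_ediv n (k:ℤ)
          rw [hnmod] at h10; linarith
        have heq : Complex.arg z - (2*((j:ℕ):ℝ)+1)*π/K - 2*π*((n/(k:ℤ) : ℤ):ℝ)
            = Complex.arg z - (2*(n:ℝ)+1)*π/K := by
          have hcast : (n:ℝ) = ((j:ℕ):ℝ) + ((n/(k:ℤ) : ℤ):ℝ)*K := by
            rw [hKdef]; exact_mod_cast hnk
          rw [hcast]
          field_simp
          ring
        rw [heq]; exact hn
  -- characterization of the timelike set
  have hS : ∀ z : ℂ, L z < 0 ↔
      ∃ n : ℤ, |Complex.arg z - (2*(n:ℝ)+1)*π/K| < π/(2*K) := by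
    intro z
    rcases eq_or_ne z 0 with rfl | hz
    · rw [hL0]
      simp only [Complex.arg_zero]
      constructor
      · intro h; exact absurd h (lt_irrefl 0)
      · rintro ⟨n, hn⟩; exact absurd hn (hfar n)
    · rw [hL z hz]
      have hrpow : 0 < ‖z‖ ^ ((2:ℝ) - K) :=
        Real.rpow_pos_of_pos (norm_pos_iff.mpr hz) _
      have habs : 0 < ‖z‖ ^ k := pow_pos (norm_pos_iff.mpr hz) k
      constructor
      · intro h
        have h1 : (z ^ k).re < 0 := by nlinarith
        rw [pow_re_eq] at h1
        have h2 : Real.cos ((k:ℝ) * Complex.arg z) < 0 := by nlinarith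
        obtain ⟨n, hn⟩ := cos_neg_iff_aux.mp h2
        refine ⟨n, ?_⟩
        have heq : |(k:ℝ) * Complex.arg z - (2*(n:ℝ)+1)*π|
            = K * |Complex.arg z - (2*(n:ℝ)+1)*π/K| := by
          rw [show (k:ℝ) * Complex.arg z - (2*(n:ℝ)+1)*π
              = K * (Complex.arg z - (2*(n:ℝ)+1)*π/K) by field_simp; ring,
            abs_mul, abs_of_pos hK]
        rw [heq] at hn
        have : π/2 = K * (π/(2*K)) := by field_simp
        rw [this] at hn
        exact lt_of_mul_lt_mul_left hn hK.le
      · rintro ⟨n, hn⟩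
        have h1 : K * |Complex.arg z - (2*(n:ℝ)+1)*π/K| < K * (π/(2*K)) :=
          mul_lt_mul_of_pos_left hn hK
        have heq : |(k:ℝ) * Complex.arg z - (2*(n:ℝ)+1)*π|
            = K * |Complex.arg z - (2*(n:ℝ)+1)*π/K| := by
          rw [show (k:ℝ) * Complex.arg z - (2*(n:ℝ)+1)*π
              = K * (Complex.arg z - (2*(n:ℝ)+1)*π/K) by field_simp; ring,
            abs_mul, abs_of_pos hK]
        have h2 : Real.cos ((k:ℝ) * Complex.arg z) < 0 := by
          apply cos_neg_iff_aux.mpr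
          refine ⟨n, ?_⟩
          rw [heq]
          calc K * |Complex.arg z - (2*(n:ℝ)+1)*π/K| < K * (π/(2*K)) := h1
            _ = π/2 := by field_simp
        have h3 : (z ^ k).re < 0 := by
          rw [pow_re_eq]; exact mul_neg_of_pos_of_neg habs h2
        exact mul_neg_of_neg_of_pos h3 hrpow
  -- uniqueness of sector
  have huniqA : ∀ (z : ℂ) (i j : Fin k), z ∈ A i → z ∈ A j → i = j := by
    intro z i j hi hj
    obtain ⟨n, hn1, hn2⟩ := (hAmem i z).mp hi
    obtain ⟨n', hn'1, hn'2⟩ := (hAmem j z).mp hj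
    have := huniq (Complex.arg z) n n' hn2 hn'2
    subst this
    rw [hn1] at hn'1
    ext
    exact_mod_cast hn'1
  -- covering
  have hcov : ∀ z : ℂ, L z < 0 ↔ ∃ j : Fin k, z ∈ A j := by
    intro z
    rw [hS]
    constructor
    · rintro ⟨n, hn⟩
      have hk0 : (0:ℤ) < (k:ℤ) := by exact_mod_cast hk
      have hmod0 : 0 ≤ n % (k:ℤ) := Int.emod_nonneg n (by omega)
      have hmodlt : n % (k:ℤ) < (k:ℤ) := Int.emod_lt_of_pos n hk0
      refine ⟨⟨(n % (k:ℤ)).toNat, by omega⟩, ?_⟩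
      rw [hAmem]
      exact ⟨n, by simp; omega, hn⟩
    · rintro ⟨j, hj⟩
      obtain ⟨n, -, hn⟩ := (hAmem j z).mp hj
      exact ⟨n, hn⟩
  -- openness
  have hopen : ∀ j : Fin k, IsOpen (A j) := by
    intro j
    rw [hAdef]
    exact isOpen_lt (continuous_const.mul continuous_norm)
      (Complex.continuous_re.comp (continuous_const.mul continuous_id))
  -- convexity
  have hcosβ : 0 ≤ Real.cos (π/(2*K)) :=
    Real.cos_nonneg_of_mem_Icc ⟨by linarith, hβle⟩
  have hconv : ∀ j : Fin k, Convex ℝ (A j) := by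
    intro j
    intro z hz w hw a b ha hb hab
    rw [hAdef] at *
    simp only [Set.mem_setOf_eq] at hz hw ⊢
    set c : ℂ := Complex.exp (-(((2*((j:ℕ):ℝ)+1)*π/K : ℝ) : ℂ) * Complex.I) with hc
    have habs : ‖a • z + b • w‖ ≤ a * ‖z‖ + b * ‖w‖ := by
      calc ‖a • z + b • w‖ ≤ ‖a • z‖ + ‖b • w‖ :=
            norm_add_le _ _
        _ = a * ‖z‖ + b * ‖w‖ := by
            rw [norm_smul, norm_smul, Real.norm_of_nonneg ha, Real.norm_of_nonneg hb]
    have hre : (c * (a • z + b • w)).re = a * (c*z).re + b * (c*w).re := by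
      rw [mul_add, show c * (a • z) = (a:ℂ) * (c * z) by rw [Complex.real_smul]; ring,
        show c * (b • w) = (b:ℂ) * (c * w) by rw [Complex.real_smul]; ring,
        Complex.add_re, Complex.re_ofReal_mul, Complex.re_ofReal_mul]
    rw [hre]
    have step1 : Real.cos (π/(2*K)) * ‖a • z + b • w‖
        ≤ a * (Real.cos (π/(2*K)) * ‖z‖) + b * (Real.cos (π/(2*K)) * ‖w‖) := by
      have := mul_le_mul_of_nonneg_left habs hcosβ
      linarith [this]
    rcases eq_or_lt_of_le ha with rfl | ha'
    · have hb1 : b = 1 := by linarith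
      subst hb1
      simp only [zero_mul, one_mul] at step1 ⊢
      nlinarith
    · have h1 : a * (Real.cos (π/(2*K)) * ‖z‖) < a * (c*z).re :=
        mul_lt_mul_of_pos_left hz ha'
      have h2 : b * (Real.cos (π/(2*K)) * ‖w‖) ≤ b * (c*w).re :=
        mul_le_mul_of_nonneg_left hw.le hb
      linarith
  -- base points
  set bp : Fin k → ℂ := fun j => Complex.exp ((((2*((j:ℕ):ℝ)+1)*π/K : ℝ) : ℂ) * Complex.I)
    with hbp
  have hbpA : ∀ j : Fin k, bp j ∈ A j := by
    intro j
    rw [hAdef, hbp]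
    simp only [Set.mem_setOf_eq]
    rw [show Complex.exp (-(((2*((j:ℕ):ℝ)+1)*π/K : ℝ) : ℂ) * Complex.I) *
        Complex.exp ((((2*((j:ℕ):ℝ)+1)*π/K : ℝ) : ℂ) * Complex.I) = 1 by
      rw [← Complex.exp_add, show -(((2*((j:ℕ):ℝ)+1)*π/K : ℝ) : ℂ) * Complex.I +
        (((2*((j:ℕ):ℝ)+1)*π/K : ℝ) : ℂ) * Complex.I = 0 by ring, Complex.exp_zero]]
    rw [Complex.norm_exp_ofReal_mul_I, Complex.one_re, mul_one]
    have := Real.cos_lt_cos_of_nonneg_of_le_pi le_rfl (by linarith : π/(2*K) ≤ π) hβ0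
    rw [Real.cos_zero] at this
    exact this
  have hbpL : ∀ j : Fin k, L (bp j) < 0 := fun j => (hcov _).mpr ⟨j, hbpA j⟩
  -- the subtype
  have hpre : ∀ j : Fin k, IsPreconnected ((Subtype.val : {z : ℂ // L z < 0} → ℂ) ⁻¹' A j) := by
    intro j
    have himg : Subtype.val '' ((Subtype.val : {z : ℂ // L z < 0} → ℂ) ⁻¹' A j) = A j := by
      rw [Set.image_preimage_eq_inter_range, Subtype.range_coe_subtype]
      exact Set.inter_eq_left.mpr (fun z hz => (hcov z).mpr ⟨j, hz⟩)
    have h1 : IsPreconnected (Subtype.val '' ((Subtype.val : {z : ℂ // L z < 0} → ℂ) ⁻¹' A j)) := by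
      rw [himg]; exact (hconv j).isPreconnected
    exact Topology.IsInducing.subtypeVal.isPreconnected_image.mp h1
  have hclopen : ∀ j : Fin k, IsClopen ((Subtype.val : {z : ℂ // L z < 0} → ℂ) ⁻¹' A j) := by
    intro j
    constructor
    · rw [← isOpen_compl_iff]
      have hcompl : ((Subtype.val : {z : ℂ // L z < 0} → ℂ) ⁻¹' A j)ᶜ
          = ⋃ i ∈ ({j}ᶜ : Set (Fin k)), ((Subtype.val : {z : ℂ // L z < 0} → ℂ) ⁻¹' A i) := by
        ext x
        simp only [Set.mem_compl_iff, Set.mem_preimage, Set.mem_iUnion, Set.mem_singleton_iff,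
          exists_prop]
        constructor
        · intro hx
          obtain ⟨i, hi⟩ := (hcov x.1).mp x.2
          exact ⟨i, fun h => hx (h ▸ hi), hi⟩
        · rintro ⟨i, hij, hi⟩ hxj
          exact hij (huniqA x.1 i j hi hxj)
      rw [hcompl]
      exact isOpen_biUnion (fun i _ => (hopen i).preimage continuous_subtype_val)
    · exact (hopen j).preimage continuous_subtype_val
  -- the bijection
  set φ : Fin k → ConnectedComponents {z : ℂ // L z < 0} :=
    fun j => ConnectedComponents.mk (⟨bp j, hbpL j⟩ : {z : ℂ // L z < 0}) with hφ
  have hinj : Function.Injective φ := by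
    intro i j hij
    rw [hφ] at hij
    simp only at hij
    rw [ConnectedComponents.coe_eq_coe'] at hij
    have h1 : connectedComponent (⟨bp j, hbpL j⟩ : {z : ℂ // L z < 0}) ⊆ (Subtype.val : {z : ℂ // L z < 0} → ℂ) ⁻¹' A j :=
      (hclopen j).connectedComponent_subset (hbpA j)
    exact huniqA (bp i) i j (hbpA i) (h1 hij)
  have hsurj : Function.Surjective φ := by
    intro c
    obtain ⟨x, rfl⟩ := ConnectedComponents.surjective_coe c
    obtain ⟨j, hj⟩ := (hcov x.1).mp x.2
    refine ⟨j, ?_⟩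
    rw [hφ]
    simp only
    rw [ConnectedComponents.coe_eq_coe']
    exact (hpre j).subset_connectedComponent
      (show x ∈ (Subtype.val : {z : ℂ // L z < 0} → ℂ) ⁻¹' A j from hj)
      (show (⟨bp j, hbpL j⟩ : {z : ℂ // L z < 0}) ∈ (Subtype.val : {z : ℂ // L z < 0} → ℂ) ⁻¹' A j from hbpA j)
  calc Nat.card (ConnectedComponents {z : ℂ // L z < 0}) = Nat.card (Fin k) :=
        (Nat.card_eq_of_bijective φ ⟨hinj, hsurj⟩).symm
    _ = k := by simp
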